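/- Let T : A → B be a (not necessarily linear) 2-local triple homomorphism between C*-algebras, and let e_1,…,e_n be mutually orthogonal tripotents in A (e_i e_i* e_i = e_i for each i, and {e_i,e_i,e_j} = 0 for i ≠ j). Then T(Σ_{i=1}^n λ_i e_i) = Σ_{i=1}^n λ_i T(e_i) for all λ_1,…,λ_n ∈ ℂ; in particular T(Σ_{i=1}^n e_i) = Σ_{i=1}^n T(e_i). -/

import Mathlib

/-- The triple product `{x,y,z} = (1/2)(x y* z + z y* x)` on a C*-algebra. -/
noncomputable def tp {A : Type*} [NonUnitalCStarAlgebra A] (x y z : A) : A :=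
  (2⁻¹ : ℂ) • (x * star y * z + z * star y * x)

/-- A bounded linear map between C*-algebras is a triple homomorphism if it preserves
the triple product. -/
def IsTripleHom {A B : Type*} [NonUnitalCStarAlgebra A] [NonUnitalCStarAlgebra B]
    (Φ : A →L[ℂ] B) : Prop :=
  ∀ x y z : A, Φ (tp x y z) = tp (Φ x) (Φ y) (Φ z)

/-- A (not necessarily linear nor continuous) map `T : A → B` is a 2-local triple
homomorphism if for every `a b : A` there is a bounded linear triple homomorphism
`Φ : A →L[ℂ] B` agreeing with `T` at `a` and at `b`. -/
def Is2LocalTripleHom {A B : Type*} [NonUnitalCStarAlgebra A] [NonUnitalCStarAlgebra B]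
    (T : A → B) : Prop :=
  ∀ a b : A, ∃ Φ : A →L[ℂ] B, IsTripleHom Φ ∧ Φ a = T a ∧ Φ b = T b

section TwoLocalAux

variable {A B : Type*} [NonUnitalCStarAlgebra A] [NonUnitalCStarAlgebra B]

open Finset

lemma tp_same (x : B) : tp x x x = x * star x * x := by
  rw [tp, ← two_smul ℂ (x * star x * x), smul_smul]
  norm_num

lemma map_tripotent {Φ : A →L[ℂ] B} (hΦ : IsTripleHom Φ) {e : A}
    (he : e * star e * e = e) :
    Φ e * star (Φ e) * Φ e = Φ e := by
  have h := hΦ e e e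
  rw [tp_same, tp_same, he] at h
  exact h.symm

lemma two_torsion_free {x : B} (h : x + x = 0) : x = 0 := by
  have h2 : (2 : ℂ) • x = 0 := by rw [two_smul]; exact h
  calc x = (2⁻¹ : ℂ) • ((2 : ℂ) • x) := by rw [smul_smul]; norm_num
    _ = 0 := by rw [h2, smul_zero]

lemma halfOrth {g h : B} (hg : g * star g * g = g) (hth : tp g g h = 0) :
    star g * h = 0 ∧ h * star g = 0 := by
  have hstarg : star g * g * star g = star g := by
    have := congrArg star hg
    simpa [star_mul, mul_assoc] using this
  have h0 : g * star g * h + h * (star g * g) = 0 := by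
    have := congrArg (fun z => (2 : ℂ) • z) hth
    simp only [tp, smul_smul] at this
    norm_num at this
    calc g * star g * h + h * (star g * g) = g * star g * h + h * star g * g := by
          rw [mul_assoc h]
      _ = 0 := this
  have hpp : g * star g * (g * star g) = g * star g := by
    calc g * star g * (g * star g) = g * (star g * g * star g) := by noncomm_ring
      _ = g * star g := by rw [hstarg]
  have hqq : star g * g * (star g * g) = star g * g := by
    calc star g * g * (star g * g) = star g * g * star g * g := by noncomm_ring
      _ = star g * g := by rw [hstarg]
  have h1 : g * star g * h + g * star g * h * (star g * g) = 0 := by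
    have h' := congrArg (fun z => g * star g * z) h0
    simp only [mul_zero] at h'
    calc g * star g * h + g * star g * h * (star g * g)
        = g * star g * (g * star g) * h + g * star g * (h * (star g * g)) := by
          rw [hpp]; noncomm_ring
      _ = g * star g * (g * star g * h) + g * star g * (h * (star g * g)) := by
          noncomm_ring
      _ = g * star g * (g * star g * h + h * (star g * g)) := by rw [mul_add]
      _ = 0 := h'
  have h2 : g * star g * h * (star g * g) + h * (star g * g) = 0 := by
    have h' := congrArg (fun z => z * (star g * g)) h0
    simp only [zero_mul] at h'
    calc g * star g * h * (star g * g) + h * (star g * g)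
        = g * star g * h * (star g * g) + h * (star g * g * (star g * g)) := by rw [hqq]
      _ = g * star g * h * (star g * g) + h * (star g * g) * (star g * g) := by
          noncomm_ring
      _ = (g * star g * h + h * (star g * g)) * (star g * g) := by rw [add_mul]
      _ = 0 := h'
  have haa : g * star g * h + g * star g * h = 0 := by
    have e : g * star g * h + g * star g * h =
        (g * star g * h + g * star g * h * (star g * g)) +
        ((g * star g * h + h * (star g * g)) -
          (g * star g * h * (star g * g) + h * (star g * g))) := by abel
    rw [h0, h1, h2] at e
    simpa using e
  have ha0 : g * star g * h = 0 := two_torsion_free haa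
  have hc0 : h * (star g * g) = 0 := by
    have := h0; rw [ha0, zero_add] at this; exact this
  constructor
  · calc star g * h = star g * g * star g * h := by rw [hstarg]
      _ = star g * (g * star g * h) := by noncomm_ring
      _ = 0 := by rw [ha0, mul_zero]
  · calc h * star g = h * (star g * g * star g) := by rw [hstarg]
      _ = h * (star g * g) * star g := by noncomm_ring
      _ = 0 := by rw [hc0, zero_mul]

/-- Four orthogonality products for tripotents with vanishing mutual triple products. -/
lemma orth4 {g h : B} (hg : g * star g * g = g) (hh : h * star h * h = h)
    (h1 : tp g g h = 0) (h2 : tp h h g = 0) :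
    star g * h = 0 ∧ h * star g = 0 ∧ star h * g = 0 ∧ g * star h = 0 :=
  ⟨(halfOrth hg h1).1, (halfOrth hg h1).2, (halfOrth hh h2).1, (halfOrth hh h2).2⟩

lemma mapsOrth4 {Φ : A →L[ℂ] B} (hΦ : IsTripleHom Φ) {u w : A}
    (hu : u * star u * u = u) (hw : w * star w * w = w)
    (h1 : tp u u w = 0) (h2 : tp w w u = 0) :
    star (Φ u) * Φ w = 0 ∧ Φ w * star (Φ u) = 0 ∧
      star (Φ w) * Φ u = 0 ∧ Φ u * star (Φ w) = 0 := by
  apply orth4 (map_tripotent hΦ hu) (map_tripotent hΦ hw)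
  · rw [← hΦ, h1, map_zero]
  · rw [← hΦ, h2, map_zero]

lemma diff_tripotent {g f : B} (hg : g * star g * g = g) (hf : f * star f * f = f)
    (h1 : (g - f) * star f = 0) (h2 : star f * (g - f) = 0)
    (h3 : star (g - f) * f = 0) (h4 : f * star (g - f) = 0) :
    (g - f) * star (g - f) * (g - f) = g - f := by
  have e1 : g * star f = f * star f := by
    have := h1; rw [sub_mul] at this; exact sub_eq_zero.mp this
  have e2 : star f * g = star f * f := by
    have := h2; rw [mul_sub] at this; exact sub_eq_zero.mp this
  have e3 : star g * f = star f * f := by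
    have := h3; rw [star_sub, sub_mul] at this; exact sub_eq_zero.mp this
  have e4 : f * star g = f * star f := by
    have := h4; rw [star_sub, mul_sub] at this; exact sub_eq_zero.mp this
  have m2 : g * star g * f = f := by
    calc g * star g * f = g * (star g * f) := by rw [mul_assoc]
      _ = g * (star f * f) := by rw [e3]
      _ = g * star f * f := by rw [mul_assoc]
      _ = f * star f * f := by rw [e1]
      _ = f := hf
  have m3 : f * star f * g = f := by
    calc f * star f * g = f * (star f * g) := by rw [mul_assoc]
      _ = f * (star f * f) := by rw [e2]
      _ = f * star f * f := by rw [← mul_assoc]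
      _ = f := hf
  have step1 : (g - f) * star (g - f) = g * star g - f * star f := by
    calc (g - f) * star (g - f)
        = g * star g - g * star f - (f * star g - f * star f) := by
          rw [star_sub]; noncomm_ring
      _ = g * star g - f * star f - (f * star f - f * star f) := by rw [e1, e4]
      _ = g * star g - f * star f := by abel
  calc (g - f) * star (g - f) * (g - f) = (g * star g - f * star f) * (g - f) := by
        rw [step1]
    _ = g * star g * g - g * star g * f - (f * star f * g - f * star f * f) := by
        noncomm_ring
    _ = g - f - (f - f) := by rw [hg, hf, m2, m3]
    _ = g - f := by abel

lemma mul_starz_z {n : ℕ} (c a : Fin n → ℝ) (u : Fin n → B)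
    (hu3 : ∀ i, u i * star (u i) * u i = u i)
    (ho : ∀ i j, i ≠ j → star (u i) * u j = 0)
    (ho' : ∀ i j, i ≠ j → u i * star (u j) = 0) :
    (∑ i, (a i : ℂ) • u i) *
      (star (∑ i, (c i : ℂ) • u i) * (∑ i, (c i : ℂ) • u i)) =
    ∑ i, ((a i * c i ^ 2 : ℝ) : ℂ) • u i := by
  have hsz : star (∑ i, (c i : ℂ) • u i) = ∑ i, (c i : ℂ) • star (u i) := by
    rw [star_sum]
    exact Finset.sum_congr rfl fun i _ => by
      rw [star_smul, Complex.star_def, Complex.conj_ofReal]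
  have hM : star (∑ i, (c i : ℂ) • u i) * (∑ i, (c i : ℂ) • u i) =
      ∑ i, ((c i ^ 2 : ℝ) : ℂ) • (star (u i) * u i) := by
    rw [hsz, Finset.sum_mul_sum]
    apply Finset.sum_congr rfl
    intro i _
    rw [Finset.sum_eq_single i]
    · rw [smul_mul_smul_comm]
      congr 1
      push_cast
      ring
    · intro j _ hji
      rw [smul_mul_smul_comm, ho i j (Ne.symm hji), smul_zero]
    · intro h; exact absurd (Finset.mem_univ i) h
  rw [hM, Finset.sum_mul_sum]
  apply Finset.sum_congr rfl
  intro i _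
  rw [Finset.sum_eq_single i]
  · rw [smul_mul_smul_comm, ← mul_assoc, hu3 i]
    congr 1
    push_cast
    ring
  · intro j _ hji
    have : u i * (star (u j) * u j) = 0 := by
      rw [← mul_assoc, ho' i j (Ne.symm hji), zero_mul]
    rw [smul_mul_smul_comm, this, smul_zero]
  · intro h; exact absurd (Finset.mem_univ i) h

/-- Two finite orthogonal-tripotent decompositions with the same family of distinct
positive coefficients coincide termwise. -/
lemma extraction {n : ℕ} (c : Fin n → ℝ) (hpos : ∀ i, 0 < c i)
    (hinj : Function.Injective c) (g f : Fin n → B)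
    (hg3 : ∀ i, g i * star (g i) * g i = g i)
    (hf3 : ∀ i, f i * star (f i) * f i = f i)
    (hgo : ∀ i j, i ≠ j → star (g i) * g j = 0)
    (hgo' : ∀ i j, i ≠ j → g i * star (g j) = 0)
    (hfo : ∀ i j, i ≠ j → star (f i) * f j = 0)
    (hfo' : ∀ i j, i ≠ j → f i * star (f j) = 0)
    (heq : ∑ i, (c i : ℂ) • g i = ∑ i, (c i : ℂ) • f i) :
    ∀ j, g j = f j := by
  have hP : ∀ k : ℕ, ∑ i, ((c i ^ (2 * k + 1) : ℝ) : ℂ) • g i =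
      ∑ i, ((c i ^ (2 * k + 1) : ℝ) : ℂ) • f i := by
    intro k
    induction k with
    | zero => simpa using heq
    | succ k ih =>
      have hg' := mul_starz_z c (fun i => c i ^ (2 * k + 1)) g hg3 hgo hgo'
      have hf' := mul_starz_z c (fun i => c i ^ (2 * k + 1)) f hf3 hfo hfo'
      have hexp : ∀ x : ℝ, x ^ (2 * k + 1) * x ^ 2 = x ^ (2 * (k + 1) + 1) := by
        intro x; ring
      calc ∑ i, ((c i ^ (2 * (k + 1) + 1) : ℝ) : ℂ) • g i
          = ∑ i, ((c i ^ (2 * k + 1) * c i ^ 2 : ℝ) : ℂ) • g i := by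
            exact Finset.sum_congr rfl fun i _ => by rw [hexp]
        _ = (∑ i, ((c i ^ (2 * k + 1) : ℝ) : ℂ) • g i) *
              (star (∑ i, (c i : ℂ) • g i) * (∑ i, (c i : ℂ) • g i)) := hg'.symm
        _ = (∑ i, ((c i ^ (2 * k + 1) : ℝ) : ℂ) • f i) *
              (star (∑ i, (c i : ℂ) • f i) * (∑ i, (c i : ℂ) • f i)) := by
            rw [ih, heq]
        _ = ∑ i, ((c i ^ (2 * k + 1) * c i ^ 2 : ℝ) : ℂ) • f i := hf'
        _ = ∑ i, ((c i ^ (2 * (k + 1) + 1) : ℝ) : ℂ) • f i := by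
            exact Finset.sum_congr rfl fun i _ => by rw [hexp]
  have hd : ∀ k : ℕ, ∑ i, ((c i ^ (2 * k + 1) : ℝ) : ℂ) • (g i - f i) = 0 := by
    intro k
    have := sub_eq_zero.mpr (hP k)
    rw [← Finset.sum_sub_distrib] at this
    simpa [smul_sub] using this
  intro j
  have hn : 0 < n := j.pos
  set v : Fin n → ℝ := fun i => c i ^ 2 with hv
  have hvinj : Set.InjOn v (Finset.univ : Finset (Fin n)) := by
    intro i _ i' _ hvi
    apply hinj
    have hfac : (c i - c i') * (c i + c i') = 0 := by
      simp only [hv] at hvi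
      linear_combination hvi
    rcases mul_eq_zero.mp hfac with h | h
    · exact sub_eq_zero.mp h
    · exfalso; have := hpos i; have := hpos i'; linarith
  set r : Fin n → ℝ := fun i => if i = j then (c j)⁻¹ else 0 with hr
  set q := Lagrange.interpolate Finset.univ v r with hq
  have hdeg : q.degree < (n : WithBot ℕ) := by
    have := Lagrange.degree_interpolate_lt r hvinj
    rw [Finset.card_univ, Fintype.card_fin] at this
    exact this
  have hnat : q.natDegree < n := by
    rcases eq_or_ne q 0 with h0 | h0
    · simpa [h0] using hn
    · exact (Polynomial.natDegree_lt_iff_degree_lt h0).mpr hdeg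
  have heval : ∀ i, q.eval (v i) = r i := fun i =>
    Lagrange.eval_interpolate_at_node r hvinj (Finset.mem_univ i)
  have key : ∀ i, (∑ k ∈ Finset.range n, q.coeff k * c i ^ (2 * k + 1)) =
      if i = j then 1 else 0 := by
    intro i
    have h1 : ∑ k ∈ Finset.range n, q.coeff k * c i ^ (2 * k + 1) =
        (∑ k ∈ Finset.range n, q.coeff k * (v i) ^ k) * c i := by
      rw [Finset.sum_mul]
      apply Finset.sum_congr rfl
      intro k _
      simp only [hv]
      ring
    rw [h1, ← Polynomial.eval_eq_sum_range' hnat, heval i]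
    by_cases h : i = j
    · subst h; simp only [hr, if_pos rfl]
      exact inv_mul_cancel₀ (ne_of_gt (hpos i))
    · simp [hr, h]
  have H3 : ∑ i, (((if i = j then (1:ℝ) else 0) : ℝ) : ℂ) • (g i - f i) = 0 := by
    calc ∑ i, (((if i = j then (1:ℝ) else 0) : ℝ) : ℂ) • (g i - f i)
        = ∑ i, (((∑ k ∈ Finset.range n, q.coeff k * c i ^ (2 * k + 1)) : ℝ) : ℂ) •
            (g i - f i) := by
          exact Finset.sum_congr rfl fun i _ => by rw [key i]
      _ = ∑ i, ∑ k ∈ Finset.range n,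
            ((q.coeff k : ℝ) : ℂ) • (((c i ^ (2 * k + 1) : ℝ) : ℂ) • (g i - f i)) := by
          apply Finset.sum_congr rfl
          intro i _
          rw [Complex.ofReal_sum, Finset.sum_smul]
          apply Finset.sum_congr rfl
          intro k _
          rw [smul_smul, Complex.ofReal_mul]
      _ = ∑ k ∈ Finset.range n, ∑ i,
            ((q.coeff k : ℝ) : ℂ) • (((c i ^ (2 * k + 1) : ℝ) : ℂ) • (g i - f i)) :=
          Finset.sum_comm
      _ = ∑ k ∈ Finset.range n, ((q.coeff k : ℝ) : ℂ) •
            (∑ i, ((c i ^ (2 * k + 1) : ℝ) : ℂ) • (g i - f i)) := by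
          exact Finset.sum_congr rfl fun k _ => (Finset.smul_sum).symm
      _ = 0 := Finset.sum_eq_zero fun k _ => by rw [hd k, smul_zero]
  have H4 : g j - f j = 0 := by
    have := H3
    simp only [apply_ite (fun x : ℝ => (x : ℂ)), Complex.ofReal_one, Complex.ofReal_zero,
      ite_smul, one_smul, zero_smul] at this
    rwa [Finset.sum_ite_eq' Finset.univ j (fun i => g i - f i), if_pos (Finset.mem_univ j)]
      at this
  exact sub_eq_zero.mp H4

/-- The key lemma: a 2-local triple homomorphism is additive on linear combinations of
mutually orthogonal tripotents with distinct positive real coefficients. -/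
lemma Lmain (T : A → B) (hT : Is2LocalTripleHom T) :
    ∀ (n : ℕ) (e : Fin n → A), (∀ i, e i * star (e i) * e i = e i) →
    (∀ i j, i ≠ j → tp (e i) (e i) (e j) = 0) →
    ∀ c : Fin n → ℝ, (∀ i, 0 < c i) → Function.Injective c →
    T (∑ i, (c i : ℂ) • e i) = ∑ i, (c i : ℂ) • T (e i) := by
  intro n
  induction n with
  | zero =>
    intro e he ho c hp hinj
    simp only [Finset.univ_eq_empty, Finset.sum_empty]
    obtain ⟨Φ, -, h1, -⟩ := hT 0 0
    rw [← h1, map_zero]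
  | succ n IH =>
    intro e he ho c hp hinj
    rcases Nat.eq_zero_or_pos n with hn0 | hn1
    · subst hn0
      rw [Fin.sum_univ_one, Fin.sum_univ_one]
      obtain ⟨Φ, hΦ, h1, h2⟩ := hT ((c 0 : ℂ) • e 0) (e 0)
      rw [← h1, map_smul, h2]
    · have hf3 : ∀ i, T (e i) * star (T (e i)) * T (e i) = T (e i) := by
        intro i
        obtain ⟨Θ, hΘ, h1, -⟩ := hT (e i) (e i)
        rw [← h1]; exact map_tripotent hΘ (he i)
      have hforth : ∀ i i', i ≠ i' →
          star (T (e i)) * T (e i') = 0 ∧ T (e i') * star (T (e i)) = 0 ∧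
          star (T (e i')) * T (e i) = 0 ∧ T (e i) * star (T (e i')) = 0 := by
        intro i i' hii
        obtain ⟨Θ, hΘ, h1, h2⟩ := hT (e i) (e i')
        rw [← h1, ← h2]
        exact mapsOrth4 hΘ (he i) (he i') (ho i i' hii) (ho i' i (Ne.symm hii))
      set x : B := T (∑ i, (c i : ℂ) • e i) - ∑ i, (c i : ℂ) • T (e i) with hxdef
      have hxj : ∀ j : Fin (n + 1), x * star x * x = ((c j ^ 2 : ℝ) : ℂ) • x := by
        intro j
        have hbsplit : ∑ i, (c i : ℂ) • e i =
            (c j : ℂ) • e j + ∑ i : Fin n, (c (j.succAbove i) : ℂ) • e (j.succAbove i) :=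
          Fin.sum_univ_succAbove (fun i => (c i : ℂ) • e i) j
        have hSsplit : ∑ i, (c i : ℂ) • T (e i) =
            (c j : ℂ) • T (e j) +
              ∑ i : Fin n, (c (j.succAbove i) : ℂ) • T (e (j.succAbove i)) :=
          Fin.sum_univ_succAbove (fun i => (c i : ℂ) • T (e i)) j
        have hTbj : T (∑ i : Fin n, (c (j.succAbove i) : ℂ) • e (j.succAbove i)) =
            ∑ i : Fin n, (c (j.succAbove i) : ℂ) • T (e (j.succAbove i)) :=
          IH (fun i => e (j.succAbove i)) (fun i => he _)
            (fun i i' hii => ho _ _ (fun hcon =>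
              hii (Fin.succAbove_right_injective (p := j) hcon)))
            (fun i => c (j.succAbove i)) (fun i => hp _)
            (hinj.comp (Fin.succAbove_right_injective (p := j)))
        obtain ⟨Φ, hΦ, hΦb, hΦbj⟩ := hT (∑ i, (c i : ℂ) • e i)
          (∑ i : Fin n, (c (j.succAbove i) : ℂ) • e (j.succAbove i))
        have hTb1 : T (∑ i, (c i : ℂ) • e i) = (c j : ℂ) • Φ (e j) +
            ∑ i : Fin n, (c (j.succAbove i) : ℂ) • T (e (j.succAbove i)) := by
          rw [← hTbj, ← hΦbj, ← hΦb]
          calc Φ (∑ i, (c i : ℂ) • e i)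
              = Φ ((c j : ℂ) • e j +
                  ∑ i : Fin n, (c (j.succAbove i) : ℂ) • e (j.succAbove i)) := by
                rw [← hbsplit]
            _ = (c j : ℂ) • Φ (e j) +
                Φ (∑ i : Fin n, (c (j.succAbove i) : ℂ) • e (j.succAbove i)) := by
                rw [map_add, map_smul]
        have hx_eq : x = (c j : ℂ) • (Φ (e j) - T (e j)) := by
          rw [hxdef, hTb1, hSsplit, smul_sub]
          abel
        obtain ⟨Ψ, hΨ, hΨb, hΨej⟩ := hT (∑ i, (c i : ℂ) • e i) (e j)
        have hTb2 : T (∑ i, (c i : ℂ) • e i) = (c j : ℂ) • T (e j) +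
            ∑ i : Fin n, (c (j.succAbove i) : ℂ) • Ψ (e (j.succAbove i)) := by
          rw [← hΨej, ← hΨb]
          calc Ψ (∑ i, (c i : ℂ) • e i)
              = Ψ ((c j : ℂ) • e j +
                  ∑ i : Fin n, (c (j.succAbove i) : ℂ) • e (j.succAbove i)) := by
                rw [← hbsplit]
            _ = (c j : ℂ) • Ψ (e j) +
                ∑ i : Fin n, (c (j.succAbove i) : ℂ) • Ψ (e (j.succAbove i)) := by
                rw [map_add, map_smul, map_sum]
                simp only [map_smul]
        have hxsum : x = ∑ i : Fin n, (c (j.succAbove i) : ℂ) •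
            (Ψ (e (j.succAbove i)) - T (e (j.succAbove i))) := by
          rw [hxdef, hTb2, hSsplit]
          simp only [smul_sub, Finset.sum_sub_distrib]
          abel
        have horthΨ : ∀ i : Fin n,
            star (T (e j)) * Ψ (e (j.succAbove i)) = 0 ∧
            Ψ (e (j.succAbove i)) * star (T (e j)) = 0 ∧
            star (Ψ (e (j.succAbove i))) * T (e j) = 0 ∧
            T (e j) * star (Ψ (e (j.succAbove i))) = 0 := by
          intro i
          rw [← hΨej]
          exact mapsOrth4 hΨ (he j) (he _) (ho j _ (Ne.symm (Fin.succAbove_ne j i)))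
            (ho _ j (Fin.succAbove_ne j i))
        have hx1 : x * star (T (e j)) = 0 := by
          rw [hxsum, Finset.sum_mul]
          apply Finset.sum_eq_zero
          intro i _
          rw [smul_mul_assoc, sub_mul,
            show Ψ (e (j.succAbove i)) * star (T (e j)) = 0 from (horthΨ i).2.1,
            show T (e (j.succAbove i)) * star (T (e j)) = 0 from
              (hforth j _ (Ne.symm (Fin.succAbove_ne j i))).2.1,
            sub_zero, smul_zero]
        have hx2 : star (T (e j)) * x = 0 := by
          rw [hxsum, Finset.mul_sum]
          apply Finset.sum_eq_zero
          intro i _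
          rw [mul_smul_comm, mul_sub,
            show star (T (e j)) * Ψ (e (j.succAbove i)) = 0 from (horthΨ i).1,
            show star (T (e j)) * T (e (j.succAbove i)) = 0 from
              (hforth j _ (Ne.symm (Fin.succAbove_ne j i))).1,
            sub_zero, smul_zero]
        have hx3 : star x * T (e j) = 0 := by
          rw [hxsum, star_sum, Finset.sum_mul]
          apply Finset.sum_eq_zero
          intro i _
          rw [star_smul, smul_mul_assoc, star_sub, sub_mul,
            show star (Ψ (e (j.succAbove i))) * T (e j) = 0 from (horthΨ i).2.2.1,
            show star (T (e (j.succAbove i))) * T (e j) = 0 from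
              (hforth _ j (Fin.succAbove_ne j i)).1,
            sub_zero, smul_zero]
        have hx4 : T (e j) * star x = 0 := by
          rw [hxsum, star_sum, Finset.mul_sum]
          apply Finset.sum_eq_zero
          intro i _
          rw [star_smul, mul_smul_comm, star_sub, mul_sub,
            show T (e j) * star (Ψ (e (j.succAbove i))) = 0 from (horthΨ i).2.2.2,
            show T (e j) * star (T (e (j.succAbove i))) = 0 from
              (hforth _ j (Fin.succAbove_ne j i)).2.1,
            sub_zero, smul_zero]
        have hcne : (c j : ℝ) ≠ 0 := ne_of_gt (hp j)
        have hy' : Φ (e j) - T (e j) = (((c j)⁻¹ : ℝ) : ℂ) • x := by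
          rw [hx_eq, smul_smul, ← Complex.ofReal_mul, inv_mul_cancel₀ hcne,
            Complex.ofReal_one, one_smul]
        have hystar : star (Φ (e j) - T (e j)) = (((c j)⁻¹ : ℝ) : ℂ) • star x := by
          rw [hy', star_smul, Complex.star_def, Complex.conj_ofReal]
        have hy1 : (Φ (e j) - T (e j)) * star (T (e j)) = 0 := by
          rw [hy', smul_mul_assoc, hx1, smul_zero]
        have hy2 : star (T (e j)) * (Φ (e j) - T (e j)) = 0 := by
          rw [hy', mul_smul_comm, hx2, smul_zero]
        have hy3 : star (Φ (e j) - T (e j)) * T (e j) = 0 := by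
          rw [hystar, smul_mul_assoc, hx3, smul_zero]
        have hy4 : T (e j) * star (Φ (e j) - T (e j)) = 0 := by
          rw [hystar, mul_smul_comm, hx4, smul_zero]
        have hyyy := diff_tripotent (map_tripotent hΦ (he j)) (hf3 j) hy1 hy2 hy3 hy4
        calc x * star x * x
            = ((c j : ℂ) • (Φ (e j) - T (e j))) * star ((c j : ℂ) • (Φ (e j) - T (e j)))
              * ((c j : ℂ) • (Φ (e j) - T (e j))) := by rw [← hx_eq]
          _ = ((c j : ℂ) * (c j : ℂ) * (c j : ℂ)) •
              ((Φ (e j) - T (e j)) * star (Φ (e j) - T (e j)) * (Φ (e j) - T (e j))) := by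
              rw [star_smul, Complex.star_def, Complex.conj_ofReal]
              rw [smul_mul_smul_comm, smul_mul_smul_comm]
          _ = ((c j ^ 2 : ℝ) : ℂ) • ((c j : ℂ) • (Φ (e j) - T (e j))) := by
              rw [hyyy, smul_smul]
              congr 1
              push_cast
              ring
          _ = ((c j ^ 2 : ℝ) : ℂ) • x := by rw [← hx_eq]
      have hne01 : (⟨0, by omega⟩ : Fin (n + 1)) ≠ ⟨1, by omega⟩ := by
        intro hcon
        simpa using congrArg Fin.val hcon
      have hcc : c ⟨0, by omega⟩ ≠ c ⟨1, by omega⟩ := fun hcon => hne01 (hinj hcon)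
      have hsq : (c ⟨0, by omega⟩ ^ 2 : ℝ) ≠ c ⟨1, by omega⟩ ^ 2 := by
        intro hcon
        apply hcc
        have h0 := hp ⟨0, by omega⟩
        have h1 := hp ⟨1, by omega⟩
        nlinarith
      have hx0 : x = 0 := by
        have h01 : ((c ⟨0, by omega⟩ ^ 2 : ℝ) : ℂ) • x =
            ((c ⟨1, by omega⟩ ^ 2 : ℝ) : ℂ) • x := by
          rw [← hxj ⟨0, by omega⟩, ← hxj ⟨1, by omega⟩]
        have hz : (((c ⟨0, by omega⟩ ^ 2 - c ⟨1, by omega⟩ ^ 2 : ℝ)) : ℂ) • x = 0 := by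
          rw [Complex.ofReal_sub, sub_smul, h01, sub_self]
        rcases smul_eq_zero.mp hz with h | h
        · exfalso
          apply hsq
          have := Complex.ofReal_eq_zero.mp h
          linarith
        · exact h
      exact sub_eq_zero.mp hx0

end TwoLocalAux

/-- A 2-local triple homomorphism is linear on finite linear combinations of mutually
orthogonal tripotents. -/
theorem twoLocal_tripleHom_linear_on_orthogonal_tripotents
    {A B : Type*} [NonUnitalCStarAlgebra A] [NonUnitalCStarAlgebra B]
    (T : A → B) (hT : Is2LocalTripleHom T)
    (n : ℕ) (e : Fin n → A) (he : ∀ i, e i * star (e i) * e i = e i)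
    (horth : ∀ i j, i ≠ j → tp (e i) (e i) (e j) = 0) :
    (∀ l : Fin n → ℂ, T (∑ i, l i • e i) = ∑ i, l i • T (e i)) ∧
    T (∑ i, e i) = ∑ i, T (e i) := by
  have hmain : ∀ l : Fin n → ℂ, T (∑ i, l i • e i) = ∑ i, l i • T (e i) := by
    intro l
    set c : Fin n → ℝ := fun i => (i : ℕ) + 1 with hc
    have hpos : ∀ i, 0 < c i := fun i => by positivity
    have hcinj : Function.Injective c := by
      intro i i' h
      simp only [hc] at h
      have : ((i : ℕ) : ℝ) = ((i' : ℕ) : ℝ) := by linarith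
      exact Fin.ext (Nat.cast_injective this)
    have hTb : T (∑ i, (c i : ℂ) • e i) = ∑ i, (c i : ℂ) • T (e i) :=
      Lmain T hT n e he horth c hpos hcinj
    have hf3 : ∀ i, T (e i) * star (T (e i)) * T (e i) = T (e i) := by
      intro i
      obtain ⟨Θ, hΘ, h1, -⟩ := hT (e i) (e i)
      rw [← h1]; exact map_tripotent hΘ (he i)
    have hforth : ∀ i i', i ≠ i' →
        star (T (e i)) * T (e i') = 0 ∧ T (e i') * star (T (e i)) = 0 ∧
        star (T (e i')) * T (e i) = 0 ∧ T (e i) * star (T (e i')) = 0 := by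
      intro i i' hii
      obtain ⟨Θ, hΘ, h1, h2⟩ := hT (e i) (e i')
      rw [← h1, ← h2]
      exact mapsOrth4 hΘ (he i) (he i') (horth i i' hii) (horth i' i (Ne.symm hii))
    obtain ⟨Φ, hΦ, hΦa, hΦb⟩ := hT (∑ i, l i • e i) (∑ i, (c i : ℂ) • e i)
    have heq : ∑ i, (c i : ℂ) • Φ (e i) = ∑ i, (c i : ℂ) • T (e i) := by
      calc ∑ i, (c i : ℂ) • Φ (e i) = Φ (∑ i, (c i : ℂ) • e i) := by
            rw [map_sum]; exact Finset.sum_congr rfl fun i _ => (map_smul Φ _ _).symm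
        _ = T (∑ i, (c i : ℂ) • e i) := hΦb
        _ = ∑ i, (c i : ℂ) • T (e i) := hTb
    have hgf : ∀ j, Φ (e j) = T (e j) := by
      apply extraction c hpos hcinj (fun i => Φ (e i)) (fun i => T (e i))
        (fun i => map_tripotent hΦ (he i)) hf3
        (fun i j hij => (mapsOrth4 hΦ (he i) (he j) (horth i j hij)
          (horth j i (Ne.symm hij))).1)
        (fun i j hij => (mapsOrth4 hΦ (he i) (he j) (horth i j hij)
          (horth j i (Ne.symm hij))).2.2.2)
        (fun i j hij => (hforth i j hij).1)
        (fun i j hij => (hforth i j hij).2.2.2)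
        heq
    calc T (∑ i, l i • e i) = Φ (∑ i, l i • e i) := hΦa.symm
      _ = ∑ i, l i • Φ (e i) := by
          rw [map_sum]; exact Finset.sum_congr rfl fun i _ => map_smul Φ _ _
      _ = ∑ i, l i • T (e i) := Finset.sum_congr rfl fun i _ => by rw [hgf i]
  refine ⟨hmain, ?_⟩
  have := hmain (fun _ => 1)
  simpa using this
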